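/- Every precosheaf F on a T0 Alexandroff space X admits a cosheafification: there is a cosheaf F⁺, defined by F⁺(U) = colim over x ∈ U of F(U_x), together with a homomorphism π : F⁺ → F (induced by inclusions U_x ⊆ U), such that for every homomorphism α : G → F from a cosheaf G, there exists a unique homomorphism α̃ : G → F⁺ with π ∘ α̃ = α. -/

import Mathlib

open CategoryTheory CategoryTheory.Limits TopologicalSpace


/-- The minimal open set containing `x`. -/
def minOpen {X : Type} [TopologicalSpace X] (x : X) : Set X :=
  ⋂₀ {U : Set X | IsOpen U ∧ x ∈ U}

lemma isOpen_minOpen {X : Type} [TopologicalSpace X] [AlexandrovDiscrete X] (x : X) :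
    IsOpen (minOpen x) :=
  isOpen_sInter fun _ h => h.1

/-- The minimal open set containing `x`, as an element of `Opens X`. -/
def Uo {X : Type} [TopologicalSpace X] [AlexandrovDiscrete X] (x : X) : Opens X :=
  ⟨minOpen x, isOpen_minOpen x⟩

lemma minOpen_le {X : Type} [TopologicalSpace X] {x : X} {U : Opens X} (hx : x ∈ U) :
    minOpen x ⊆ (U : Set X) :=
  Set.sInter_subset_of_mem ⟨U.isOpen, hx⟩

/-- A precosheaf of abelian groups on `X`: a covariant functor on open sets. -/
abbrev Precosheaf (X : Type) [TopologicalSpace X] := Opens X ⥤ AddCommGrpCat.{0}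

variable {X : Type} [TopologicalSpace X]

/-- The nerve of an open cover: the nonempty finite intersections of its members. -/
def nerveSet (𝒰 : Set (Opens X)) : Set (Opens X) :=
  {V | (V : Set X).Nonempty ∧ ∃ s : Finset (Opens X), ↑s ⊆ 𝒰 ∧ s.Nonempty ∧ V = s.inf id}

lemma nerve_le {𝒰 : Set (Opens X)} {U : Opens X} (h : ∀ V ∈ 𝒰, V ≤ U)
    {V : Opens X} (hV : V ∈ nerveSet 𝒰) : V ≤ U := by
  obtain ⟨-, s, hs, ⟨w, hw⟩, rfl⟩ := hV
  exact le_trans (Finset.inf_le hw) (h w (hs hw))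

/-- The diagram of a precosheaf over the nerve of an open cover. -/
def nerveDiagram (F : Precosheaf X) (𝒰 : Set (Opens X)) :
    ObjectProperty.FullSubcategory (· ∈ nerveSet 𝒰) ⥤ AddCommGrpCat.{0} :=
  ObjectProperty.ι (· ∈ nerveSet 𝒰) ⋙ F

/-- The canonical cocone on the nerve diagram with apex `F(U)`. -/
def coverCocone (F : Precosheaf X) (U : Opens X) (𝒰 : Set (Opens X))
    (h : ∀ V ∈ 𝒰, V ≤ U) : Cocone (nerveDiagram F 𝒰) where
  pt := F.obj U
  ι :=
    { app := fun V => F.map (homOfLE (nerve_le h V.2))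
      naturality := fun a b f => by
        dsimp [nerveDiagram]
        rw [Category.comp_id, ← F.map_comp]
        rfl }

/-- A precosheaf is a cosheaf if for every open `U` and every open cover `𝒰` of `U`, the
canonical map from the colimit over the nerve of `𝒰` to `F(U)` is an isomorphism, i.e.
`F(U)` is the colimit of the nerve diagram. -/
def IsCosheaf (F : Precosheaf X) : Prop :=
  ∀ (U : Opens X) (𝒰 : Set (Opens X)) (h𝒰 : ∀ V ∈ 𝒰, V ≤ U), U ≤ sSup 𝒰 →
    Nonempty (IsColimit (coverCocone F U 𝒰 h𝒰))

/-- The Alexandroff space `X(P)` of a poset `P`: open sets are the up-sets. -/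
def upTop (P : Type) [Preorder P] : TopologicalSpace P where
  IsOpen := IsUpperSet
  isOpen_univ := isUpperSet_univ
  isOpen_inter _ _ := IsUpperSet.inter
  isOpen_sUnion _ h := isUpperSet_sUnion h

variable {P : Type} [PartialOrder P]

/-- The diagram of a cellular cosheaf `F : P ⥤ Ab` over the subposet `U ⊆ P`. -/
def openDiagram (F : P ⥤ AddCommGrpCat.{0}) (U : Set P) :
    ObjectProperty.FullSubcategory (· ∈ U) ⥤ AddCommGrpCat.{0} :=
  ObjectProperty.ι (· ∈ U) ⋙ F

noncomputable def hatMap (F : P ⥤ AddCommGrpCat.{0}) {U V : Set P} (h : U ⊆ V) :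
    colimit (openDiagram F U) ⟶ colimit (openDiagram F V) :=
  colimit.pre (openDiagram F V) (ObjectProperty.ιOfLE fun _ hx => h hx)

lemma hatMap_ι (F : P ⥤ AddCommGrpCat.{0}) {U V : Set P} (h : U ⊆ V)
    (j : ObjectProperty.FullSubcategory (· ∈ U)) :
    colimit.ι (openDiagram F U) j ≫ hatMap F h =
      colimit.ι (openDiagram F V) ⟨j.1, h j.2⟩ := by
  exact colimit.ι_pre (openDiagram F V) (ObjectProperty.ιOfLE fun _ hx => h hx) j

/-- The cosheaf `F̂` on `X(P)` associated to a cellular cosheaf `F : P ⥤ Ab`,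
with `F̂(U) = colim_{x ∈ U} F(x)`. -/
noncomputable def hatF (F : P ⥤ AddCommGrpCat.{0}) :
    @TopologicalSpace.Opens P (upTop P) ⥤ AddCommGrpCat.{0} where
  obj U := colimit (openDiagram F (U : Set P))
  map {U V} h := hatMap F h.le
  map_id U := by
    apply colimit.hom_ext
    intro j
    erw [hatMap_ι]
    simp
  map_comp {U V W} f g := by
    apply colimit.hom_ext
    intro j
    exact ((hatMap_ι F _ j).trans ((hatMap_ι F g.le ⟨j.1, f.le j.2⟩).symm.trans
      (congrArg (· ≫ hatMap F g.le) (hatMap_ι F f.le j).symm))).trans (Category.assoc _ _ _)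
section PtDiagram
variable {X : Type} [TopologicalSpace X]

/-- The points of `U`, preordered by `x ≤ y` iff `U_x ⊆ U_y`. -/
def PtCat (U : Set X) : Type := {x : X // x ∈ U}

instance (U : Set X) : Preorder (PtCat U) where
  le a b := minOpen a.1 ⊆ minOpen b.1
  le_refl _ := subset_rfl
  le_trans _ _ _ h1 h2 := Set.Subset.trans h1 h2

variable [AlexandrovDiscrete X]

/-- The diagram `x ∈ U ↦ G(U_x)` over the poset `U` (with `x ≤ y` iff `U_x ⊆ U_y`). -/
def ptDiagram (G : Precosheaf X) (U : Set X) : PtCat U ⥤ AddCommGrpCat.{0} where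
  obj x := G.obj (Uo x.1)
  map {a b} f := G.map (homOfLE (SetLike.coe_subset_coe.mp f.le))
  map_id a := G.map_id _
  map_comp f g := G.map_comp _ _

/-- The canonical cocone on `ptDiagram G U` with apex `G(U)`, given by the inclusions
`U_x ⊆ U`. -/
def ptCocone (G : Precosheaf X) (U : Opens X) : Cocone (ptDiagram G (U : Set X)) where
  pt := G.obj U
  ι :=
    { app := fun x => G.map (homOfLE (minOpen_le x.2))
      naturality := fun a b f => by
        dsimp [ptDiagram]
        rw [Category.comp_id, ← G.map_comp]
        rfl }

end PtDiagram

section Plus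
variable {X : Type} [TopologicalSpace X] [AlexandrovDiscrete X]

/-- The inclusion of posets of points induced by `U ⊆ V`. -/
def ptIncl {U V : Set X} (h : U ⊆ V) : PtCat U ⥤ PtCat V :=
  Monotone.functor (f := fun a => (⟨a.1, h a.2⟩ : PtCat V)) fun _ _ hab => hab

noncomputable def plusMap (F : Precosheaf X) {U V : Set X} (h : U ⊆ V) :
    colimit (ptDiagram F U) ⟶ colimit (ptDiagram F V) :=
  colimit.pre (ptDiagram F V) (ptIncl h)

lemma plusMap_ι (F : Precosheaf X) {U V : Set X} (h : U ⊆ V) (j : PtCat U) :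
    colimit.ι (ptDiagram F U) j ≫ plusMap F h =
      colimit.ι (ptDiagram F V) ⟨j.1, h j.2⟩ :=
  colimit.ι_pre (ptDiagram F V) (ptIncl h) j

/-- The cosheafification `F⁺` of a precosheaf `F` on a `T0` Alexandroff space:
`F⁺(U) = colim_{x ∈ U} F(U_x)`. -/
noncomputable def plus (F : Precosheaf X) : Precosheaf X where
  obj U := colimit (ptDiagram F (U : Set X))
  map {U V} h := plusMap F h.le
  map_id U := by
    apply colimit.hom_ext
    intro j
    erw [plusMap_ι, Category.comp_id]
    rfl
  map_comp {U V W} f g := by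
    apply colimit.hom_ext
    intro j
    exact ((plusMap_ι F _ j).trans ((plusMap_ι F g.le ⟨j.1, f.le j.2⟩).symm.trans
      (congrArg (· ≫ plusMap F g.le) (plusMap_ι F f.le j).symm))).trans (Category.assoc _ _ _)

lemma plus_map (F : Precosheaf X) {U V : Opens X} (h : U ⟶ V) :
    (plus F).map h = plusMap F h.le := rfl

/-- The canonical homomorphism `π : F⁺ → F`, induced by the inclusions `U_x ⊆ U`. -/
noncomputable def plusπ (F : Precosheaf X) : plus F ⟶ F where
  app U := colimit.desc (ptDiagram F (U : Set X)) (ptCocone F U)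
  naturality {U V} h := by
    apply colimit.hom_ext
    intro j
    rw [plus_map]
    refine (Category.assoc _ _ _).symm.trans ?_
    refine (congrArg (· ≫ colimit.desc _ (ptCocone F V)) (plusMap_ι F h.le j)).trans ?_
    refine (colimit.ι_desc _ _).trans
      (Eq.trans ?_ (colimit.ι_desc_assoc (ptCocone F U) j (F.map h)).symm)
    exact Eq.trans (congrArg F.map (Subsingleton.elim _ _))
      (F.map_comp (homOfLE (minOpen_le j.2)) h)

end Plus

section Aux
variable {X : Type} [TopologicalSpace X] [AlexandrovDiscrete X]

lemma mem_minOpen_self (x : X) : x ∈ minOpen x :=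
  Set.mem_sInter.mpr fun _ h => h.2

lemma Uo_le {x : X} {U : Opens X} (hx : x ∈ U) : Uo x ≤ U :=
  minOpen_le hx

lemma mem_Uo_self (x : X) : x ∈ Uo x := mem_minOpen_self x

/-- Lemma A: at a minimal open, `π` is an isomorphism. -/
lemma isIso_plusπ_app_Uo (F : Precosheaf X) (x : X) :
    IsIso ((plusπ F).app (Uo x)) := by
  refine ⟨colimit.ι (ptDiagram F ((Uo x : Opens X) : Set X)) ⟨x, mem_minOpen_self x⟩, ?_, ?_⟩
  · apply colimit.hom_ext
    intro j
    have hj : minOpen j.1 ⊆ minOpen x := minOpen_le j.2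
    show colimit.ι _ j ≫ colimit.desc _ (ptCocone F (Uo x)) ≫ _ = _
    erw [Category.comp_id]
    erw [← Category.assoc, colimit.ι_desc]
    exact colimit.w (ptDiagram F ((Uo x : Opens X) : Set X))
      (homOfLE (hj : j ≤ (⟨x, mem_minOpen_self x⟩ : PtCat _)))
  · show colimit.ι _ _ ≫ colimit.desc _ (ptCocone F (Uo x)) = _
    erw [colimit.ι_desc]
    exact F.map_id (Uo x)

end Aux

section Part1
variable {X : Type} [TopologicalSpace X] [AlexandrovDiscrete X]

lemma nerve_inf {𝒰 : Set (Opens X)} {V V' : Opens X} (hV : V ∈ nerveSet 𝒰)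
    (hV' : V' ∈ nerveSet 𝒰) {x : X} (hx : x ∈ (V ⊓ V' : Opens X)) :
    V ⊓ V' ∈ nerveSet 𝒰 := by
  classical
  obtain ⟨-, s, hs, hsne, rfl⟩ := hV
  obtain ⟨-, s', hs', hsne', rfl⟩ := hV'
  refine ⟨⟨x, hx⟩, s ∪ s', ?_, hsne.mono Finset.subset_union_left, ?_⟩
  · rw [Finset.coe_union]; exact Set.union_subset hs hs'
  · rw [Finset.inf_union]

lemma mem_nerve_of_mem {𝒰 : Set (Opens X)} {V : Opens X} (hV : V ∈ 𝒰) {x : X}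
    (hx : x ∈ V) : V ∈ nerveSet 𝒰 := by
  refine ⟨⟨x, hx⟩, {V}, by simpa using hV, Finset.singleton_nonempty V, by simp⟩

/-- Constructor for points with the `PtCat` type. -/
def PtCat.mk' {U : Set X} (x : X) (hx : x ∈ U) : PtCat U := ⟨x, hx⟩

lemma leg_comm {F : Precosheaf X} {𝒰 : Set (Opens X)}
    (s : Cocone (nerveDiagram (plus F) 𝒰)) {W V : Opens X}
    (hW : W ∈ nerveSet 𝒰) (hV : V ∈ nerveSet 𝒰) (hle : W ≤ V) {x : X} (hx : x ∈ W)
    (hx' : x ∈ V) :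
    colimit.ι (ptDiagram F (W : Set X)) ⟨x, hx⟩ ≫ s.ι.app ⟨W, hW⟩ =
      colimit.ι (ptDiagram F (V : Set X)) ⟨x, hx'⟩ ≫ s.ι.app ⟨V, hV⟩ := by
  erw [← s.w (ObjectProperty.homMk (homOfLE hle) : (⟨W, hW⟩ : ObjectProperty.FullSubcategory (· ∈ nerveSet 𝒰)) ⟶ ⟨V, hV⟩),
    ← Category.assoc]
  congr 1
  exact plusMap_ι F (SetLike.coe_subset_coe.mpr hle) ⟨x, hx⟩

/-- Lemma C : any two nerve legs agree on the generator at a common point. -/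
lemma leg_comm₂ {F : Precosheaf X} {𝒰 : Set (Opens X)}
    (s : Cocone (nerveDiagram (plus F) 𝒰)) {V V' : Opens X}
    (hV : V ∈ nerveSet 𝒰) (hV' : V' ∈ nerveSet 𝒰) {x : X} (hx : x ∈ V) (hx' : x ∈ V') :
    colimit.ι (ptDiagram F (V : Set X)) ⟨x, hx⟩ ≫ s.ι.app ⟨V, hV⟩ =
      colimit.ι (ptDiagram F (V' : Set X)) ⟨x, hx'⟩ ≫ s.ι.app ⟨V', hV'⟩ := by
  have hW : V ⊓ V' ∈ nerveSet 𝒰 := nerve_inf hV hV' ⟨hx, hx'⟩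
  rw [← leg_comm s hW hV inf_le_left (⟨hx, hx'⟩ : x ∈ (V ⊓ V' : Opens X)) hx,
    ← leg_comm s hW hV' inf_le_right (⟨hx, hx'⟩ : x ∈ (V ⊓ V' : Opens X)) hx']

variable (F : Precosheaf X) (U : Opens X) (𝒰 : Set (Opens X))
  (h𝒰 : ∀ V ∈ 𝒰, V ≤ U)

/-- A choice of a cover element containing `x`. -/
noncomputable def Vx (hcov : U ≤ sSup 𝒰) (x : PtCat (U : Set X)) : Opens X :=
  (Opens.mem_sSup.mp (hcov x.2)).choose

lemma Vx_mem (hcov : U ≤ sSup 𝒰) (x : PtCat (U : Set X)) : Vx U 𝒰 hcov x ∈ 𝒰 :=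
  (Opens.mem_sSup.mp (hcov x.2)).choose_spec.1

lemma mem_Vx (hcov : U ≤ sSup 𝒰) (x : PtCat (U : Set X)) : x.1 ∈ Vx U 𝒰 hcov x :=
  (Opens.mem_sSup.mp (hcov x.2)).choose_spec.2

lemma Vx_nerve (hcov : U ≤ sSup 𝒰) (x : PtCat (U : Set X)) : Vx U 𝒰 hcov x ∈ nerveSet 𝒰 :=
  mem_nerve_of_mem (Vx_mem U 𝒰 hcov x) (mem_Vx U 𝒰 hcov x)

noncomputable def descCocone (hcov : U ≤ sSup 𝒰) (s : Cocone (nerveDiagram (plus F) 𝒰)) :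
    Cocone (ptDiagram F (U : Set X)) where
  pt := s.pt
  ι :=
    { app := fun x =>
        colimit.ι (ptDiagram F ((Vx U 𝒰 hcov x : Opens X) : Set X)) ⟨x.1, mem_Vx U 𝒰 hcov x⟩ ≫
          s.ι.app ⟨Vx U 𝒰 hcov x, Vx_nerve U 𝒰 hcov x⟩
      naturality := fun a b f => by
        simp only [Functor.const_obj_map, Category.comp_id]
        have hab : minOpen a.1 ⊆ minOpen b.1 := leOfHom f
        have haVb : a.1 ∈ Vx U 𝒰 hcov b :=
          minOpen_le (mem_Vx U 𝒰 hcov b) (hab (mem_minOpen_self a.1))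
        have step1 : (ptDiagram F (U : Set X)).map f ≫
            colimit.ι (ptDiagram F ((Vx U 𝒰 hcov b : Opens X) : Set X)) ⟨b.1, mem_Vx U 𝒰 hcov b⟩ =
            colimit.ι (ptDiagram F ((Vx U 𝒰 hcov b : Opens X) : Set X)) ⟨a.1, haVb⟩ :=
          colimit.w (ptDiagram F ((Vx U 𝒰 hcov b : Opens X) : Set X))
            (homOfLE (show PtCat.mk' a.1 haVb ≤ PtCat.mk' b.1 (mem_Vx U 𝒰 hcov b) from hab))
        erw [← Category.assoc, step1]
        exact leg_comm₂ s (Vx_nerve U 𝒰 hcov b) (Vx_nerve U 𝒰 hcov a) haVb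
          (mem_Vx U 𝒰 hcov a) }

noncomputable def plusIsColimit (hcov : U ≤ sSup 𝒰) : IsColimit (coverCocone (plus F) U 𝒰 h𝒰) where
  desc s := colimit.desc (ptDiagram F (U : Set X)) (descCocone F U 𝒰 hcov s)
  fac s V := by
    apply colimit.hom_ext
    intro j
    erw [← Category.assoc]
    show (colimit.ι (ptDiagram F ((V.obj : Opens X) : Set X)) j ≫ plusMap F _) ≫ _ = _
    erw [plusMap_ι F (SetLike.coe_subset_coe.mpr (nerve_le h𝒰 V.2)) j, colimit.ι_desc]
    exact (leg_comm₂ s (Vx_nerve U 𝒰 hcov _) V.2 (mem_Vx U 𝒰 hcov _) (show (j.1 : X) ∈ V.obj from j.2)).trans (by rfl)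
  uniq s m hm := by
    let m' : colimit (ptDiagram F (U : Set X)) ⟶ s.pt := m
    show m' = colimit.desc (ptDiagram F (U : Set X)) (descCocone F U 𝒰 hcov s)
    apply colimit.hom_ext
    intro j
    erw [colimit.ι_desc]
    show colimit.ι (ptDiagram F (U : Set X)) j ≫ m = _
    have h1 : colimit.ι (ptDiagram F (U : Set X)) j =
        colimit.ι (ptDiagram F ((Vx U 𝒰 hcov j : Opens X) : Set X)) ⟨j.1, mem_Vx U 𝒰 hcov j⟩ ≫
          plusMap F (SetLike.coe_subset_coe.mpr (h𝒰 _ (Vx_mem U 𝒰 hcov j))) := by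
      erw [plusMap_ι]; rfl
    erw [h1, Category.assoc]
    show _ ≫ (coverCocone (plus F) U 𝒰 h𝒰).ι.app ⟨Vx U 𝒰 hcov j, Vx_nerve U 𝒰 hcov j⟩ ≫ m = _
    rw [hm ⟨Vx U 𝒰 hcov j, Vx_nerve U 𝒰 hcov j⟩]
    rfl

lemma isCosheaf_plus : IsCosheaf (plus F) :=
  fun U 𝒰 h𝒰 hcov => ⟨plusIsColimit F U 𝒰 h𝒰 hcov⟩

end Part1

section Part2
variable {X : Type} [TopologicalSpace X] [AlexandrovDiscrete X]

lemma map₂ {G : Precosheaf X} {A B C : Opens X} (f : A ⟶ B) (g : B ⟶ C) (hAC : A ≤ C) :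
    G.map f ≫ G.map g = G.map (homOfLE hAC) := by
  rw [← G.map_comp]
  exact congrArg G.map (Subsingleton.elim _ _)

lemma comp_ι {G : Precosheaf X} {U : Opens X} {z x : X} (hz : z ∈ (U : Set X))
    (hx : x ∈ (U : Set X)) (hle : Uo z ≤ Uo x) :
    G.map (homOfLE hle) ≫ colimit.ι (ptDiagram G (U : Set X)) ⟨x, hx⟩ =
      colimit.ι (ptDiagram G (U : Set X)) ⟨z, hz⟩ :=
  colimit.w (ptDiagram G (U : Set X))
    (homOfLE (show PtCat.mk' z hz ≤ PtCat.mk' x hx from SetLike.coe_subset_coe.mpr hle))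

/-- Claim E: for a cosheaf `G`, the maps from minimal opens into `G(U)` are jointly epic. -/
lemma jointly_epi {G : Precosheaf X} (hG : IsCosheaf G) (U : Opens X) {A : AddCommGrpCat.{0}}
    {f g : G.obj U ⟶ A}
    (h : ∀ (z : X) (hz : z ∈ U),
      G.map (homOfLE (Uo_le hz)) ≫ f = G.map (homOfLE (Uo_le hz)) ≫ g) :
    f = g := by
  obtain ⟨hc⟩ := hG U {W | ∃ x ∈ (U : Set X), W = Uo x}
    (by rintro V ⟨x, hx, rfl⟩; exact Uo_le hx)
    (by intro x hx; exact Opens.mem_sSup.mpr ⟨Uo x, ⟨x, hx, rfl⟩, mem_Uo_self x⟩)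
  apply hc.hom_ext
  rintro ⟨V, hV⟩
  have hVU : V ≤ U := nerve_le (by rintro W ⟨x, hx, rfl⟩; exact Uo_le hx) hV
  obtain ⟨hcV⟩ := hG V {W | ∃ z ∈ (V : Set X), W = Uo z}
    (by rintro W ⟨z, hz, rfl⟩; exact Uo_le hz)
    (by intro z hz; exact Opens.mem_sSup.mpr ⟨Uo z, ⟨z, hz, rfl⟩, mem_Uo_self z⟩)
  apply hcV.hom_ext
  rintro ⟨W, hW⟩
  have hWV : W ≤ V := nerve_le (by rintro W' ⟨z', hz', rfl⟩; exact Uo_le hz') hW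
  obtain ⟨hWne, t, ht, ⟨w, hw⟩, hWeq⟩ := hW
  have hWw : W ≤ w := hWeq ▸ Finset.inf_le hw
  obtain ⟨z, hzV, rfl⟩ := ht hw
  have hzU : z ∈ U := hVU hzV
  have key : ∀ (c : W ⟶ U), G.map c ≫ f = G.map c ≫ g := by
    intro c
    rw [Subsingleton.elim c (homOfLE hWw ≫ homOfLE (Uo_le hzU)), G.map_comp,
      Category.assoc, Category.assoc, h z hzU]
  show G.map (homOfLE hWV) ≫ G.map (homOfLE hVU) ≫ f =
    G.map (homOfLE hWV) ≫ G.map (homOfLE hVU) ≫ g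
  rw [← Category.assoc, ← Category.assoc, map₂ _ _ (hWV.trans hVU)]
  exact key _

/-- The cover of `U` by all nonempty open subsets of minimal open sets. -/
def minCover (U : Opens X) : Set (Opens X) :=
  {W : Opens X | (W : Set X).Nonempty ∧ ∃ x ∈ (U : Set X), W ≤ Uo x}

lemma minCover_le (U : Opens X) : ∀ W ∈ minCover U, W ≤ U := by
  rintro W ⟨hne, x, hx, hle⟩; exact hle.trans (Uo_le hx)

lemma minCover_cov (U : Opens X) : U ≤ sSup (minCover U) := by
  intro x hx
  exact Opens.mem_sSup.mpr ⟨Uo x, ⟨⟨x, mem_Uo_self x⟩, x, hx, le_rfl⟩, mem_Uo_self x⟩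

lemma nerve_minCover {U V : Opens X} (hV : V ∈ nerveSet (minCover U)) :
    ∃ x ∈ (U : Set X), V ≤ Uo x := by
  obtain ⟨hne, t, ht, ⟨w, hw⟩, rfl⟩ := hV
  obtain ⟨hne', x, hx, hle⟩ := ht hw
  exact ⟨x, hx, le_trans (Finset.inf_le hw) hle⟩

/-- A choice of `x ∈ U` with `V ⊆ U_x`, for `V` in the nerve of `minCover U`. -/
noncomputable def xV {U V : Opens X} (hV : V ∈ nerveSet (minCover U)) : X :=
  (nerve_minCover hV).choose

lemma xV_mem {U V : Opens X} (hV : V ∈ nerveSet (minCover U)) : xV hV ∈ (U : Set X) :=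
  (nerve_minCover hV).choose_spec.1

lemma le_xV {U V : Opens X} (hV : V ∈ nerveSet (minCover U)) : V ≤ Uo (xV hV) :=
  (nerve_minCover hV).choose_spec.2

/-- The cocone exhibiting `colim_{x∈U} G(U_x)` as a cocone over the nerve of `minCover U`. -/
noncomputable def tauCocone (G : Precosheaf X) (hG : IsCosheaf G) (U : Opens X) :
    Cocone (nerveDiagram G (minCover U)) where
  pt := colimit (ptDiagram G (U : Set X))
  ι :=
    { app := fun V =>
        G.map (homOfLE (le_xV V.2)) ≫
          colimit.ι (ptDiagram G (U : Set X)) ⟨xV V.2, xV_mem V.2⟩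
      naturality := fun a b f => by
        simp only [Functor.const_obj_map, Category.comp_id]
        have hab : a.obj ≤ b.obj := leOfHom f.hom
        apply jointly_epi hG a.obj
        intro z hz
        have hzU : z ∈ (U : Set X) := nerve_le (minCover_le U) a.2 hz
        have hza : Uo z ≤ a.obj := Uo_le hz
        have eL : G.map (homOfLE (Uo_le hz)) ≫ G.map (homOfLE hab) ≫
            G.map (homOfLE (le_xV b.2)) ≫
            colimit.ι (ptDiagram G (U : Set X)) ⟨xV b.2, xV_mem b.2⟩ =
            colimit.ι (ptDiagram G (U : Set X)) ⟨z, hzU⟩ := by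
          erw [← Category.assoc, map₂ _ _ (hza.trans hab), ← Category.assoc,
            map₂ _ _ ((hza.trans hab).trans (le_xV b.2)),
            comp_ι hzU (xV_mem b.2) ((hza.trans hab).trans (le_xV b.2))]
        have eR : G.map (homOfLE (Uo_le hz)) ≫ G.map (homOfLE (le_xV a.2)) ≫
            colimit.ι (ptDiagram G (U : Set X)) ⟨xV a.2, xV_mem a.2⟩ =
            colimit.ι (ptDiagram G (U : Set X)) ⟨z, hzU⟩ := by
          erw [← Category.assoc, map₂ _ _ (hza.trans (le_xV a.2)),
            comp_ι hzU (xV_mem a.2) (hza.trans (le_xV a.2))]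
        show G.map (homOfLE (Uo_le hz)) ≫ G.map (homOfLE hab) ≫
            G.map (homOfLE (le_xV b.2)) ≫
            colimit.ι (ptDiagram G (U : Set X)) ⟨xV b.2, xV_mem b.2⟩ =
          G.map (homOfLE (Uo_le hz)) ≫ G.map (homOfLE (le_xV a.2)) ≫
            colimit.ι (ptDiagram G (U : Set X)) ⟨xV a.2, xV_mem a.2⟩
        rw [eL, eR] }

/-- Lemma D: for a cosheaf `G`, each component of `π : G⁺ → G` is an isomorphism. -/
lemma isIso_plusπ_app {G : Precosheaf X} (hG : IsCosheaf G) (U : Opens X) :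
    IsIso ((plusπ G).app U) := by
  obtain ⟨hc⟩ := hG U (minCover U) (minCover_le U) (minCover_cov U)
  refine ⟨hc.desc (tauCocone G hG U), ?_, ?_⟩
  · let σ : colimit (ptDiagram G (U : Set X)) ⟶ G.obj U := (plusπ G).app U
    show σ ≫ hc.desc (tauCocone G hG U) = 𝟙 (colimit (ptDiagram G (U : Set X)))
    apply colimit.hom_ext
    intro j
    have hjU : Uo j.1 ∈ minCover U := ⟨⟨j.1, mem_Uo_self j.1⟩, j.1, j.2, le_rfl⟩
    have hjN : Uo j.1 ∈ nerveSet (minCover U) := mem_nerve_of_mem hjU (mem_Uo_self j.1)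
    erw [Category.comp_id, ← Category.assoc]
    have h1 : colimit.ι (ptDiagram G (U : Set X)) j ≫ σ =
        G.map (homOfLE (Uo_le (j.2 : j.1 ∈ U))) := by
      show colimit.ι _ j ≫ colimit.desc _ (ptCocone G U) = _
      rw [colimit.ι_desc]; rfl
    rw [h1]
    have h2 : G.map (homOfLE (Uo_le (j.2 : j.1 ∈ U))) ≫ hc.desc (tauCocone G hG U) =
        (tauCocone G hG U).ι.app ⟨Uo j.1, hjN⟩ := by
      show (coverCocone G U (minCover U) (minCover_le U)).ι.app ⟨Uo j.1, hjN⟩ ≫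
        hc.desc (tauCocone G hG U) = _
      rw [hc.fac]
    erw [h2]
    show G.map (homOfLE (le_xV hjN)) ≫
      colimit.ι (ptDiagram G (U : Set X)) ⟨xV hjN, xV_mem hjN⟩ =
      colimit.ι (ptDiagram G (U : Set X)) j
    exact comp_ι (j.2 : j.1 ∈ (U : Set X)) (xV_mem hjN) (le_xV hjN)
  · apply hc.hom_ext
    intro V
    erw [← Category.assoc, hc.fac]
    erw [Category.comp_id]
    show (G.map (homOfLE (le_xV V.2)) ≫
      colimit.ι (ptDiagram G (U : Set X)) ⟨xV V.2, xV_mem V.2⟩) ≫ (plusπ G).app U =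
      (coverCocone G U (minCover U) (minCover_le U)).ι.app V
    have h3 : colimit.ι (ptDiagram G (U : Set X)) ⟨xV V.2, xV_mem V.2⟩ ≫ (plusπ G).app U =
        G.map (homOfLE (Uo_le (xV_mem V.2 : xV V.2 ∈ U))) := by
      show colimit.ι _ _ ≫ colimit.desc _ (ptCocone G U) = _
      erw [colimit.ι_desc]; rfl
    erw [Category.assoc, h3, map₂ _ _ (nerve_le (minCover_le U) V.2)]
    rfl

/-- The natural transformation of point diagrams induced by `α`. -/
def ptNat {G F : Precosheaf X} (α : G ⟶ F) (U : Set X) :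
    ptDiagram G U ⟶ ptDiagram F U where
  app x := α.app (Uo x.1)
  naturality a b f := α.naturality _

/-- Functoriality of `plus`. -/
noncomputable def plusNat {G F : Precosheaf X} (α : G ⟶ F) : plus G ⟶ plus F where
  app U := colimMap (ptNat α ((U : Opens X) : Set X))
  naturality U V h := by
    apply colimit.hom_ext
    intro j
    show colimit.ι _ j ≫ plusMap G _ ≫ colimMap _ = colimit.ι _ j ≫ colimMap _ ≫ plusMap F _
    erw [← Category.assoc, ← Category.assoc, plusMap_ι, ι_colimMap, ι_colimMap,
      Category.assoc, plusMap_ι]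
    rfl

lemma plusNat_π {G F : Precosheaf X} (α : G ⟶ F) :
    plusNat α ≫ plusπ F = plusπ G ≫ α := by
  apply NatTrans.ext; funext U
  apply colimit.hom_ext
  intro j
  show colimit.ι _ j ≫ colimMap _ ≫ colimit.desc _ (ptCocone F U) =
    colimit.ι _ j ≫ colimit.desc _ (ptCocone G U) ≫ α.app U
  erw [← Category.assoc, ι_colimMap, Category.assoc, colimit.ι_desc, ← Category.assoc,
    colimit.ι_desc]
  exact (α.naturality _).symm

lemma cancel_π {G F : Precosheaf X} (hG : IsCosheaf G) {β₁ β₂ : G ⟶ plus F}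
    (h : β₁ ≫ plusπ F = β₂ ≫ plusπ F) : β₁ = β₂ := by
  have happ : ∀ (z : X), β₁.app (Uo z) = β₂.app (Uo z) := by
    intro z
    haveI := isIso_plusπ_app_Uo F z
    have h' := congrArg (fun t => NatTrans.app t (Uo z)) h
    simp only [NatTrans.comp_app] at h'
    exact (cancel_mono ((plusπ F).app (Uo z))).mp h'
  apply NatTrans.ext; funext U
  apply jointly_epi hG U
  intro z hz
  rw [β₁.naturality (homOfLE (Uo_le hz)), β₂.naturality (homOfLE (Uo_le hz)), happ z]

end Part2

/-- Every precosheaf `F` on a `T0` Alexandroff space admits a cosheafification: `F⁺` is a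
cosheaf and `π : F⁺ → F` is universal among homomorphisms from cosheaves to `F`. -/
theorem stmt_13 {X : Type} [TopologicalSpace X] [AlexandrovDiscrete X] [T0Space X]
    (F : Precosheaf X) :
    IsCosheaf (plus F) ∧
      ∀ (G : Precosheaf X), IsCosheaf G → ∀ α : G ⟶ F,
        ∃! α' : G ⟶ plus F, α' ≫ plusπ F = α := by
  constructor
  · exact isCosheaf_plus F
  · intro G hG α
    haveI : ∀ U, IsIso ((plusπ G).app U) := fun U => isIso_plusπ_app hG U
    haveI : IsIso (plusπ G) := NatIso.isIso_of_isIso_app _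
    refine ⟨inv (plusπ G) ≫ plusNat α, ?_, ?_⟩
    · show (inv (plusπ G) ≫ plusNat α) ≫ plusπ F = α
      rw [Category.assoc, plusNat_π, ← Category.assoc, IsIso.inv_hom_id, Category.id_comp]
    · intro β hβ
      apply cancel_π hG
      rw [hβ, Category.assoc, plusNat_π, ← Category.assoc, IsIso.inv_hom_id, Category.id_comp]
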